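/- Let z₁,…,z_k, ζ₁,…,ζ_k ∈ ℂ be 2k pairwise distinct points, L₀ an invertible n×n complex matrix, and define L(z) = L₀ + Σᵢ aᵢbᵢ†/(z − zᵢ) and M(z) = L₀⁻¹ − Σⱼ cⱼdⱼ†/(z − ζⱼ). Assume L(z)·M(z) = I and M(z)·L(z) = I for all z outside {z₁,…,z_k, ζ₁,…,ζ_k}. Then for each i and each j: if bᵢ ≠ 0 then M(zᵢ)·aᵢ = 0; if aᵢ ≠ 0 then bᵢ†·M(zᵢ) = 0; if dⱼ ≠ 0 then L(ζⱼ)·cⱼ = 0; and if cⱼ ≠ 0 then dⱼ†·L(ζⱼ) = 0. -/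

import Mathlib

open Matrix

open Filter Topology

lemma lax_key {n k : ℕ} (z ζ : Fin k → ℂ) (hzinj : Function.Injective z)
    (hne : ∀ i j, z i ≠ ζ j)
    (L₀ M₀ : Matrix (Fin n) (Fin n) ℂ)
    (A B : Fin k → Matrix (Fin n) (Fin n) ℂ)
    (L M : ℂ → Matrix (Fin n) (Fin n) ℂ)
    (hL : ∀ w, L w = L₀ + ∑ i, (w - z i)⁻¹ • A i)
    (hM : ∀ w, M w = M₀ + ∑ j, (w - ζ j)⁻¹ • B j)
    (hinv : ∀ w : ℂ, (∀ i, w ≠ z i) → (∀ j, w ≠ ζ j) → L w * M w = 1)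
    (i : Fin k) : A i * M (z i) = 0 := by
  set p := z i with hp
  -- continuity of M at p
  have hMc : ContinuousAt M p := by
    have : ∀ j, ContinuousAt (fun w : ℂ => (w - ζ j)⁻¹ • B j) p := by
      intro j
      exact (((continuousAt_id.sub continuousAt_const).inv₀
        (sub_ne_zero.mpr (hne i j))).smul continuousAt_const)
    have hsum : ContinuousAt (fun w : ℂ => ∑ j, (w - ζ j)⁻¹ • B j) p :=
      tendsto_finset_sum _ (fun j _ => this j)
    have h2 : ContinuousAt (fun w : ℂ => M₀ + ∑ j, (w - ζ j)⁻¹ • B j) p :=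
      continuousAt_const.add hsum
    exact h2.congr (by filter_upwards with w using (hM w).symm)
  -- limit of (w - p) • L w along punctured nbhd
  have hLlim : Tendsto (fun w => (w - p) • L w) (𝓝[≠] p) (𝓝 (A i)) := by
    have heq : ∀ w : ℂ, (w - p) • L w
        = (w - p) • L₀ + ∑ j, ((w - p) * (w - z j)⁻¹) • A j := by
      intro w
      rw [hL w, smul_add, Finset.smul_sum]
      simp [smul_smul]
    have hterm : ∀ j, Tendsto (fun w => ((w - p) * (w - z j)⁻¹) • A j) (𝓝[≠] p)
        (𝓝 (if j = i then A j else 0)) := by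
      intro j
      by_cases hj : j = i
      · subst hj
        simp only [if_pos rfl]
        have : ∀ᶠ w in 𝓝[≠] p, ((w - p) * (w - z j)⁻¹) • A j = A j := by
          filter_upwards [self_mem_nhdsWithin] with w hw
          rw [← hp, mul_inv_cancel₀ (sub_ne_zero.mpr hw), one_smul]
        rw [tendsto_congr' this]
        exact tendsto_const_nhds
      · simp only [if_neg hj]
        have hc : ContinuousAt (fun w : ℂ => ((w - p) * (w - z j)⁻¹) • A j) p := by
          have hne' : p - z j ≠ 0 := sub_ne_zero.mpr (fun h => hj (hzinj h).symm)
          exact (((continuousAt_id.sub continuousAt_const).mul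
            ((continuousAt_id.sub continuousAt_const).inv₀ hne')).smul continuousAt_const)
        have := hc.tendsto.mono_left (nhdsWithin_le_nhds (s := {p}ᶜ))
        simpa using this
    have hsum : Tendsto (fun w => (w - p) • L₀ + ∑ j, ((w - p) * (w - z j)⁻¹) • A j)
        (𝓝[≠] p) (𝓝 (0 + ∑ j, if j = i then A j else 0)) := by
      refine Tendsto.add ?_ (tendsto_finset_sum _ fun j _ => hterm j)
      have hc : ContinuousAt (fun w : ℂ => (w - p) • L₀) p :=
        (continuousAt_id.sub continuousAt_const).smul continuousAt_const
      have := hc.tendsto.mono_left (nhdsWithin_le_nhds (s := {p}ᶜ))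
      simpa using this
    simp only [Finset.sum_ite_eq', Finset.mem_univ, if_pos, zero_add] at hsum
    exact (tendsto_congr heq).mpr hsum
  have h1 : Tendsto (fun w => ((w - p) • L w) * M w) (𝓝[≠] p) (𝓝 (A i * M p)) :=
    hLlim.mul (hMc.tendsto.mono_left nhdsWithin_le_nhds)
  -- but also tends to 0
  have hav : ∀ᶠ w in 𝓝[≠] p, (∀ j, w ≠ z j) ∧ (∀ j, w ≠ ζ j) := by
    have hA : ∀ᶠ w in 𝓝[≠] p, ∀ j, w ≠ z j := by
      rw [eventually_all]
      intro j
      by_cases hj : j = i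
      · subst hj; rw [← hp]
        filter_upwards [self_mem_nhdsWithin] with w hw using hw
      · exact (eventually_ne_nhds
          (sub_ne_zero.mp (sub_ne_zero.mpr (fun h => hj (hzinj h).symm)))).filter_mono
          nhdsWithin_le_nhds
    have hB : ∀ᶠ w in 𝓝[≠] p, ∀ j, w ≠ ζ j := by
      rw [eventually_all]
      intro j
      exact (eventually_ne_nhds (hne i j)).filter_mono nhdsWithin_le_nhds
    exact hA.and hB
  have hev : ∀ᶠ w in 𝓝[≠] p, ((w - p) • L w) * M w = (w - p) • (1 : Matrix (Fin n) (Fin n) ℂ) := by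
    filter_upwards [hav] with w ⟨h1', h2'⟩
    rw [smul_mul_assoc, hinv w h1' h2']
  have h2 : Tendsto (fun w => ((w - p) • L w) * M w) (𝓝[≠] p)
      (𝓝 (0 : Matrix (Fin n) (Fin n) ℂ)) := by
    rw [tendsto_congr' hev]
    have hc : ContinuousAt (fun w : ℂ => (w - p) • (1 : Matrix (Fin n) (Fin n) ℂ)) p :=
      (continuousAt_id.sub continuousAt_const).smul continuousAt_const
    have := hc.tendsto.mono_left (nhdsWithin_le_nhds (s := {p}ᶜ))
    simpa using this
  exact tendsto_nhds_unique h1 h2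

lemma outer_mul_eq_zero {n : ℕ} (u v : Fin n → ℂ) (N : Matrix (Fin n) (Fin n) ℂ)
    (h : vecMulVec u v * N = 0) (hu : u ≠ 0) : Matrix.vecMul v N = 0 := by
  obtain ⟨p, hp⟩ := Function.ne_iff.mp hu
  funext q
  have h1 := congrFun (congrFun h p) q
  simp only [mul_apply, vecMulVec_apply, Matrix.zero_apply] at h1
  have : u p * ∑ r, v r * N r q = 0 := by
    rw [Finset.mul_sum]; rw [← h1]; congr 1; funext r; ring
  have h2 := (mul_eq_zero.mp this).resolve_left hp
  simpa [Matrix.vecMul, dotProduct] using h2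

lemma mul_outer_eq_zero {n : ℕ} (u v : Fin n → ℂ) (N : Matrix (Fin n) (Fin n) ℂ)
    (h : N * vecMulVec u v = 0) (hv : v ≠ 0) : N.mulVec u = 0 := by
  obtain ⟨q, hq⟩ := Function.ne_iff.mp hv
  funext p
  have h1 := congrFun (congrFun h p) q
  simp only [mul_apply, vecMulVec_apply, Matrix.zero_apply] at h1
  have : (∑ r, N p r * u r) * v q = 0 := by
    rw [Finset.sum_mul]; rw [← h1]; congr 1; funext r; ring
  have h2 := (mul_eq_zero.mp this).resolve_right hq
  simpa [Matrix.mulVec, dotProduct] using h2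

/-- For a rational Lax matrix `L(z)` with inverse `M(z)` in additive form, the
additive eigenvectors satisfy `M(zᵢ)·aᵢ = 0`, `bᵢ†·M(zᵢ) = 0`, `L(ζⱼ)·cⱼ = 0`
and `dⱼ†·L(ζⱼ) = 0`. -/
theorem lax_additive_eigenvector_equations (n k : ℕ) (z ζ : Fin k → ℂ)
    (hdist : Function.Injective (Sum.elim z ζ : Fin k ⊕ Fin k → ℂ))
    (L₀ : Matrix (Fin n) (Fin n) ℂ) (hL₀ : IsUnit L₀)
    (a b c d : Fin k → Fin n → ℂ)
    (L M : ℂ → Matrix (Fin n) (Fin n) ℂ)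
    (hL : ∀ w : ℂ, L w = L₀ + ∑ i : Fin k, (w - z i)⁻¹ • vecMulVec (a i) (b i))
    (hM : ∀ w : ℂ, M w = L₀⁻¹ - ∑ j : Fin k, (w - ζ j)⁻¹ • vecMulVec (c j) (d j))
    (hinv : ∀ w : ℂ, (∀ i, w ≠ z i) → (∀ j, w ≠ ζ j) →
      L w * M w = 1 ∧ M w * L w = 1) :
    (∀ i, b i ≠ 0 → (M (z i)).mulVec (a i) = 0) ∧
    (∀ i, a i ≠ 0 → Matrix.vecMul (b i) (M (z i)) = 0) ∧
    (∀ j, d j ≠ 0 → (L (ζ j)).mulVec (c j) = 0) ∧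
    (∀ j, c j ≠ 0 → Matrix.vecMul (d j) (L (ζ j)) = 0) := by
  have hzinj : Function.Injective z := fun i j h => by
    have := hdist (a₁ := Sum.inl i) (a₂ := Sum.inl j) (by simpa using h)
    simpa using this
  have hζinj : Function.Injective ζ := fun i j h => by
    have := hdist (a₁ := Sum.inr i) (a₂ := Sum.inr j) (by simpa using h)
    simpa using this
  have hzζ : ∀ i j, z i ≠ ζ j := fun i j h => by
    have := hdist (a₁ := Sum.inl i) (a₂ := Sum.inr j) (by simpa using h)
    simpa using this
  set A : Fin k → Matrix (Fin n) (Fin n) ℂ := fun i => vecMulVec (a i) (b i) with hA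
  set B : Fin k → Matrix (Fin n) (Fin n) ℂ := fun j => -vecMulVec (c j) (d j) with hB
  have hM' : ∀ w, M w = L₀⁻¹ + ∑ j, (w - ζ j)⁻¹ • B j := by
    intro w
    rw [hM w, sub_eq_add_neg, ← Finset.sum_neg_distrib]
    simp [hB]
  -- key facts
  have k1 : ∀ i, A i * M (z i) = 0 := fun i =>
    lax_key z ζ hzinj hzζ L₀ L₀⁻¹ A B L M hL hM' (fun w h1 h2 => (hinv w h1 h2).1) i
  have k2 : ∀ j, B j * L (ζ j) = 0 := fun j =>
    lax_key ζ z hζinj (fun i j => (hzζ j i).symm) L₀⁻¹ L₀ B A M L hM' hL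
      (fun w h1 h2 => (hinv w h2 h1).2) j
  -- transposed versions
  have k3 : ∀ i, M (z i) * A i = 0 := by
    intro i
    have hLt : ∀ w, (L w)ᵀ = L₀ᵀ + ∑ i, (w - z i)⁻¹ • (A i)ᵀ := by
      intro w; rw [hL w]; simp [hA, transpose_add, transpose_smul, transpose_sum]
    have hMt : ∀ w, (M w)ᵀ = (L₀⁻¹)ᵀ + ∑ j, (w - ζ j)⁻¹ • (B j)ᵀ := by
      intro w; rw [hM' w]; simp [transpose_add, transpose_smul, transpose_sum]
    have := lax_key z ζ hzinj hzζ L₀ᵀ (L₀⁻¹)ᵀ (fun i => (A i)ᵀ) (fun j => (B j)ᵀ)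
      (fun w => (L w)ᵀ) (fun w => (M w)ᵀ) hLt hMt
      (fun w h1 h2 => by rw [← transpose_mul, (hinv w h1 h2).2, transpose_one]) i
    have h2 : (M (z i) * A i)ᵀ = 0 := by rw [transpose_mul]; exact this
    calc M (z i) * A i = ((M (z i) * A i)ᵀ)ᵀ := by rw [transpose_transpose]
    _ = 0 := by rw [h2, transpose_zero]
  have k4 : ∀ j, L (ζ j) * B j = 0 := by
    intro j
    have hLt : ∀ w, (L w)ᵀ = L₀ᵀ + ∑ i, (w - z i)⁻¹ • (A i)ᵀ := by
      intro w; rw [hL w]; simp [hA, transpose_add, transpose_smul, transpose_sum]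
    have hMt : ∀ w, (M w)ᵀ = (L₀⁻¹)ᵀ + ∑ j, (w - ζ j)⁻¹ • (B j)ᵀ := by
      intro w; rw [hM' w]; simp [transpose_add, transpose_smul, transpose_sum]
    have := lax_key ζ z hζinj (fun i j => (hzζ j i).symm) (L₀⁻¹)ᵀ L₀ᵀ
      (fun j => (B j)ᵀ) (fun i => (A i)ᵀ)
      (fun w => (M w)ᵀ) (fun w => (L w)ᵀ) hMt hLt
      (fun w h1 h2 => by rw [← transpose_mul, (hinv w h2 h1).1, transpose_one]) j
    have h2 : (L (ζ j) * B j)ᵀ = 0 := by rw [transpose_mul]; exact this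
    calc L (ζ j) * B j = ((L (ζ j) * B j)ᵀ)ᵀ := by rw [transpose_transpose]
    _ = 0 := by rw [h2, transpose_zero]
  refine ⟨fun i hb => ?_, fun i ha => ?_, fun j hd => ?_, fun j hc => ?_⟩
  · exact mul_outer_eq_zero (a i) (b i) (M (z i)) (k3 i) hb
  · exact outer_mul_eq_zero (a i) (b i) (M (z i)) (k1 i) ha
  · have : L (ζ j) * vecMulVec (c j) (d j) = 0 := by
      have := k4 j
      simp only [hB, mul_neg, neg_eq_zero] at this
      exact this
    exact mul_outer_eq_zero (c j) (d j) (L (ζ j)) this hd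
  · have : vecMulVec (c j) (d j) * L (ζ j) = 0 := by
      have := k2 j
      simp only [hB, neg_mul, neg_eq_zero] at this
      exact this
    exact outer_mul_eq_zero (c j) (d j) (L (ζ j)) this hc
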